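/- For any two anonymized histograms h1 and h2, the sorted ℓ1 distance is bounded by the ℓ1 distance of cumulative prevalences: ℓ1(h1, h2) ≤ Σ_{r≥1} |φ_{r+}(h1) − φ_{r+}(h2)|. -/

import Mathlib

/-- The `i`-th largest element (0-indexed) of a finite multiset of naturals,
taken to be `0` when `i` exceeds the number of elements. -/
def nthLargest (h : Multiset ℕ) (i : ℕ) : ℕ :=
  ((h.sort (· ≤ ·)).reverse).getD i 0

/-- The sorted ℓ1 distance `Σ_{i≥1} |n_(i)(h1) − n_(i)(h2)|` between two
anonymized histograms.  All terms with `i ≥ h1.card + h2.card` vanish, so the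
finite sum below equals the infinite sum. -/
def sortedL1 (h1 h2 : Multiset ℕ) : ℕ :=
  ∑ i ∈ Finset.range (h1.card + h2.card),
    ((nthLargest h1 i : ℤ) - (nthLargest h2 i : ℤ)).natAbs

/-- The prevalence `φ_r(h)`: the number of elements of `h` equal to `r`. -/
def prevalence (h : Multiset ℕ) (r : ℕ) : ℕ := h.count r

/-- The cumulative prevalence `φ_{r+}(h) = Σ_{s≥r} φ_s(h)`: the number of
elements of `h` that are at least `r`. -/
def cumPrevalence (h : Multiset ℕ) (r : ℕ) : ℕ := (h.filter (fun a => r ≤ a)).card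

lemma getD_sorted_iff (r : ℕ) (hr : 1 ≤ r) :
    ∀ (l : List ℕ), l.Pairwise (· ≥ ·) →
      ∀ i, r ≤ l.getD i 0 ↔ i < (l.filter (fun a => r ≤ a)).length := by
  intro l
  induction l with
  | nil => intro _ i; simp; omega
  | cons a t ih =>
    intro hs i
    rw [List.pairwise_cons] at hs
    obtain ⟨ha, ht⟩ := hs
    by_cases hra : r ≤ a
    · rw [List.filter_cons_of_pos (by simpa using hra)]
      cases i with
      | zero => simpa using hra
      | succ j =>
        simp only [List.getD_cons_succ, List.length_cons]
        rw [ih ht j]; omega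
    · have hlt : (a :: t).getD i 0 < r := by
        rcases lt_or_ge i (a :: t).length with h | h
        · have hmem : (a :: t).getD i 0 ∈ a :: t := by
            rw [List.getD_eq_getElem _ _ h]; exact List.getElem_mem _
          rcases List.mem_cons.mp hmem with h1 | h1
          · omega
          · have := ha _ h1; omega
        · rw [List.getD_eq_default _ _ h]; omega
      have hf : (a :: t).filter (fun b => r ≤ b) = [] := by
        rw [List.filter_eq_nil_iff]
        intro b hb
        simp only [decide_eq_true_eq, not_le]
        rcases List.mem_cons.mp hb with h1 | h1
        · omega
        · have := ha _ h1; omega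
      rw [hf]
      simp only [List.length_nil]
      omega

lemma nth_iff (h : Multiset ℕ) {r : ℕ} (hr : 1 ≤ r) (i : ℕ) :
    r ≤ nthLargest h i ↔ i < cumPrevalence h r := by
  have hs : ((h.sort (· ≤ ·)).reverse).Pairwise (· ≥ ·) := by
    rw [List.pairwise_reverse]
    exact Multiset.pairwise_sort (s := h) (r := fun a b => a ≤ b)
  have key : (Multiset.filter (fun a => r ≤ a) h).card
      = (List.filter (fun a => decide (r ≤ a)) (Multiset.sort h (· ≤ ·))).length := by
    conv_lhs => rw [← Multiset.sort_eq (s := h) (r := (· ≤ ·))]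
    rw [Multiset.filter_coe, Multiset.coe_card]
  rw [nthLargest, getD_sorted_iff r hr _ hs i, cumPrevalence, key,
    List.filter_reverse, List.length_reverse]

lemma nthLargest_le_sum (h : Multiset ℕ) (i : ℕ) : nthLargest h i ≤ h.sum := by
  rw [nthLargest]
  set l := (h.sort (· ≤ ·)).reverse with hl
  rcases lt_or_ge i l.length with hi | hi
  · have hmem : l.getD i 0 ∈ l := by
      rw [List.getD_eq_getElem _ _ hi]; exact List.getElem_mem _
    have hmem2 : l.getD i 0 ∈ h := by
      rw [hl, List.mem_reverse] at hmem
      rw [← Multiset.sort_eq (s := h) (r := (· ≤ ·))]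
      exact_mod_cast hmem
    exact Multiset.single_le_sum (fun x _ => Nat.zero_le x) _ hmem2
  · rw [List.getD_eq_default _ _ hi]; exact Nat.zero_le _

lemma rep (h : Multiset ℕ) (N i : ℕ) (hN : h.sum ≤ N) :
    (nthLargest h i : ℤ) =
      ∑ r ∈ Finset.Icc 1 N, (if i < cumPrevalence h r then (1 : ℤ) else 0) := by
  have hv : nthLargest h i ≤ N := le_trans (nthLargest_le_sum h i) hN
  have hcongr : ∀ r ∈ Finset.Icc 1 N,
      (if i < cumPrevalence h r then (1 : ℤ) else 0) =
      if r ≤ nthLargest h i then 1 else 0 := by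
    intro r hrm
    rw [Finset.mem_Icc] at hrm
    simp only [← nth_iff h hrm.1 i]
  rw [Finset.sum_congr rfl hcongr, Finset.sum_boole]
  have : (Finset.Icc 1 N).filter (fun r => r ≤ nthLargest h i)
      = Finset.Icc 1 (nthLargest h i) := by
    ext r
    simp only [Finset.mem_filter, Finset.mem_Icc]
    omega
  rw [this, Nat.card_Icc]
  simp

lemma sum_ind (K n : ℕ) (hn : n ≤ K) :
    ∑ i ∈ Finset.range K, (if i < n then (1 : ℤ) else 0) = n := by
  rw [Finset.sum_boole]
  have : (Finset.range K).filter (fun i => i < n) = Finset.range n := by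
    ext i
    simp only [Finset.mem_filter, Finset.mem_range]
    omega
  rw [this, Finset.card_range]

lemma sum_indicator_abs' (K m n : ℕ) (hn : n ≤ K) (hmn : m ≤ n) :
    ∑ i ∈ Finset.range K,
      |(if i < m then (1 : ℤ) else 0) - (if i < n then 1 else 0)| = (n : ℤ) - m := by
  have hcongr : ∀ i ∈ Finset.range K,
      |(if i < m then (1 : ℤ) else 0) - (if i < n then 1 else 0)|
      = (if i < n then (1 : ℤ) else 0) - (if i < m then 1 else 0) := by
    intro i _
    by_cases h1 : i < m <;> by_cases h2 : i < n <;> simp [h1, h2] <;> omega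
  rw [Finset.sum_congr rfl hcongr, Finset.sum_sub_distrib, sum_ind K n hn,
    sum_ind K m (le_trans hmn hn)]

lemma sum_indicator_abs (K m n : ℕ) (hm : m ≤ K) (hn : n ≤ K) :
    ∑ i ∈ Finset.range K,
      |(if i < m then (1 : ℤ) else 0) - (if i < n then 1 else 0)| = |(m : ℤ) - n| := by
  rcases le_total m n with hmn | hmn
  · rw [sum_indicator_abs' K m n hn hmn, abs_sub_comm, abs_of_nonneg (by push_cast; omega)]
  · have : ∀ i ∈ Finset.range K,
        |(if i < m then (1 : ℤ) else 0) - (if i < n then 1 else 0)|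
        = |(if i < n then (1 : ℤ) else 0) - (if i < m then 1 else 0)| :=
      fun i _ => abs_sub_comm _ _
    rw [Finset.sum_congr rfl this, sum_indicator_abs' K n m hm hmn,
      abs_of_nonneg (by push_cast; omega)]

theorem sortedL1_le_cumPrevalence_dist (h1 h2 : Multiset ℕ)
    (hp1 : ∀ a ∈ h1, 0 < a) (hp2 : ∀ a ∈ h2, 0 < a) :
    sortedL1 h1 h2 ≤
      ∑ r ∈ Finset.Icc 1 (h1.sum + h2.sum),
        ((cumPrevalence h1 r : ℤ) - (cumPrevalence h2 r : ℤ)).natAbs := by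
  set N := h1.sum + h2.sum with hN
  set K := Multiset.card h1 + Multiset.card h2 with hK
  rw [← Nat.cast_le (α := ℤ)]
  push_cast [sortedL1, Int.natCast_natAbs]
  calc ∑ i ∈ Finset.range K, |(nthLargest h1 i : ℤ) - (nthLargest h2 i : ℤ)|
      ≤ ∑ i ∈ Finset.range K, ∑ r ∈ Finset.Icc 1 N,
          |(if i < cumPrevalence h1 r then (1 : ℤ) else 0)
            - (if i < cumPrevalence h2 r then 1 else 0)| := by
        apply Finset.sum_le_sum
        intro i _
        rw [rep h1 N i (by omega), rep h2 N i (by omega), ← Finset.sum_sub_distrib]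
        exact Finset.abs_sum_le_sum_abs _ _
    _ = ∑ r ∈ Finset.Icc 1 N, ∑ i ∈ Finset.range K,
          |(if i < cumPrevalence h1 r then (1 : ℤ) else 0)
            - (if i < cumPrevalence h2 r then 1 else 0)| := Finset.sum_comm
    _ = ∑ r ∈ Finset.Icc 1 N, |(cumPrevalence h1 r : ℤ) - (cumPrevalence h2 r : ℤ)| := by
        apply Finset.sum_congr rfl
        intro r _
        exact sum_indicator_abs K _ _
          (le_trans (Multiset.card_le_card (Multiset.filter_le _ _)) (by omega))
          (le_trans (Multiset.card_le_card (Multiset.filter_le _ _)) (by omega))
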